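/- arXiv:1307.4388 — 2 statements merged into one kernel-verified Lean document; each statement's English description precedes it below -/
import Mathlib

section
/- The fixed point equation for η₁ has a unique positive solution: given σ² > 0, α ≥ 0, and a nonnegative bounded random variable X (representing B₁²/B), the map η ↦ (σ² + α·E[B] − α·E[X²η/(1+Xη)])⁻¹ with E[B] ≥ E[X] ≥ 0 finite has a unique fixed point η₁ in (0, 1/σ²]. -/
open MeasureTheory

theorem eta1_fixed_point_exists_unique
    {Ω : Type*} [MeasurableSpace Ω] (μ : Measure Ω) [IsProbabilityMeasure μ]
    (X : Ω → ℝ) (hXmeas : Measurable X) (hXnonneg : ∀ ω, 0 ≤ X ω)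
    (Mb : ℝ) (hXbdd : ∀ ω, X ω ≤ Mb)
    (σ2 α c : ℝ) (hσ : 0 < σ2) (hα : 0 ≤ α) (hc : ∫ ω, X ω ∂μ ≤ c) :
    ∃! η : ℝ, η ∈ Set.Ioc 0 (1 / σ2) ∧
      (σ2 + α * c - α * ∫ ω, (X ω) ^ 2 * η / (1 + X ω * η) ∂μ)⁻¹ = η := by
  have hint : ∀ (h : Ω → ℝ) (C : ℝ), Measurable h → (∀ ω, 0 ≤ h ω) → (∀ ω, h ω ≤ C) →
      Integrable h μ := fun h C hm h0 hC =>
    (integrable_const C).mono' hm.aestronglyMeasurable (ae_of_all _ fun ω => by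
      rw [Real.norm_eq_abs, abs_of_nonneg (h0 ω)]; exact hC ω)
  have hXint : Integrable X μ := hint X Mb hXmeas hXnonneg hXbdd
  set I := ∫ ω, X ω ∂μ with hIdef
  have hcI : 0 ≤ c - I := sub_nonneg.2 hc
  have hden : ∀ {η : ℝ}, 0 ≤ η → ∀ ω, (0:ℝ) < 1 + X ω * η := fun {η} hη ω => by
    nlinarith [mul_nonneg (hXnonneg ω) hη]
  set J : ℝ → ℝ := fun η => ∫ ω, X ω / (1 + X ω * η) ∂μ with hJdef
  set T : ℝ → ℝ := fun η => ∫ ω, X ω * η / (1 + X ω * η) ∂μ with hTdef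
  have hgmeas : ∀ η : ℝ, Measurable fun ω => X ω / (1 + X ω * η) := fun η =>
    hXmeas.div (measurable_const.add (hXmeas.mul_const η))
  have hfmeas : ∀ η : ℝ, Measurable fun ω => X ω * η / (1 + X ω * η) := fun η =>
    (hXmeas.mul_const η).div (measurable_const.add (hXmeas.mul_const η))
  have hgint : ∀ {η : ℝ}, 0 ≤ η → Integrable (fun ω => X ω / (1 + X ω * η)) μ := fun {η} hη =>
    hint _ Mb (hgmeas η) (fun ω => div_nonneg (hXnonneg ω) (hden hη ω).le)
      (fun ω => le_trans (div_le_self (hXnonneg ω)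
        (by nlinarith [mul_nonneg (hXnonneg ω) hη])) (hXbdd ω))
  have hfint : ∀ {η : ℝ}, 0 ≤ η → Integrable (fun ω => X ω * η / (1 + X ω * η)) μ :=
    fun {η} hη =>
    hint _ 1 (hfmeas η) (fun ω => div_nonneg (mul_nonneg (hXnonneg ω) hη) (hden hη ω).le)
      (fun ω => (div_le_one (hden hη ω)).2 (by linarith [mul_nonneg (hXnonneg ω) hη]))
  have hJnonneg : ∀ {η : ℝ}, 0 ≤ η → 0 ≤ J η := fun {η} hη =>
    integral_nonneg fun ω => div_nonneg (hXnonneg ω) (hden hη ω).le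
  have hTnonneg : ∀ {η : ℝ}, 0 ≤ η → 0 ≤ T η := fun {η} hη =>
    integral_nonneg fun ω => div_nonneg (mul_nonneg (hXnonneg ω) hη) (hden hη ω).le
  -- rewriting the main expression
  have hmain : ∀ {η : ℝ}, 0 ≤ η →
      σ2 + α * c - α * ∫ ω, (X ω) ^ 2 * η / (1 + X ω * η) ∂μ
        = σ2 + α * (c - I) + α * J η := by
    intro η hη
    have hid : ∀ ω, (X ω) ^ 2 * η / (1 + X ω * η) = X ω - X ω / (1 + X ω * η) := fun ω => by
      have h0 := (hden hη ω).ne'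
      field_simp
      ring
    have hIJ : ∫ ω, (X ω) ^ 2 * η / (1 + X ω * η) ∂μ = I - J η := by
      simp only [hid]
      rw [integral_sub hXint (hgint hη)]
    rw [hIJ]; ring
  have hTJ : ∀ η : ℝ, T η = η * J η := fun η => by
    simp only [hTdef, hJdef]
    rw [← integral_const_mul]
    congr 1; funext ω; ring
  -- define φ
  set φ : ℝ → ℝ := fun η => η * σ2 + α * η * (c - I) + α * T η with hφdef
  have hφD : ∀ {η : ℝ}, 0 ≤ η → φ η = η * (σ2 + α * (c - I) + α * J η) := fun {η} hη => by
    simp only [hφdef, hTJ]; ring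
  have hTmono : ∀ {a b : ℝ}, 0 ≤ a → a ≤ b → T a ≤ T b := fun {a b} ha hab => by
    have hb : 0 ≤ b := ha.trans hab
    refine integral_mono (hfint ha) (hfint hb) fun ω => ?_
    rw [div_le_div_iff₀ (hden ha ω) (hden hb ω)]
    nlinarith [mul_nonneg (hXnonneg ω) (sub_nonneg.2 hab), sq_nonneg (X ω)]
  have hφmono : ∀ {a b : ℝ}, 0 ≤ a → a < b → φ a < φ b := fun {a b} ha hab => by
    have h1 : a * σ2 < b * σ2 := by nlinarith
    have h2 : α * a * (c - I) ≤ α * b * (c - I) := by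
      nlinarith [mul_nonneg (mul_nonneg hα hcI) (sub_nonneg.2 hab.le)]
    have h3 : α * T a ≤ α * T b := mul_le_mul_of_nonneg_left (hTmono ha hab.le) hα
    simp only [hφdef]; linarith
  -- continuity of T on [0, 1/σ2]
  have h0σ : (0:ℝ) ≤ 1 / σ2 := by positivity
  have hTcont : ContinuousOn T (Set.Icc 0 (1 / σ2)) := by
    intro η₀ hη₀
    refine continuousWithinAt_of_dominated (bound := fun _ => (1:ℝ)) ?_ ?_
      (integrable_const 1) ?_
    · exact Filter.Eventually.of_forall fun η => (hfmeas η).aestronglyMeasurable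
    · filter_upwards [self_mem_nhdsWithin] with η hη
      refine ae_of_all _ fun ω => ?_
      have hη0 : 0 ≤ η := hη.1
      rw [Real.norm_eq_abs,
        abs_of_nonneg (div_nonneg (mul_nonneg (hXnonneg ω) hη0) (hden hη0 ω).le)]
      exact (div_le_one (hden hη0 ω)).2 (by linarith [mul_nonneg (hXnonneg ω) hη0])
    · refine ae_of_all _ fun ω => ?_
      have hc1 : ContinuousAt (fun η : ℝ => X ω * η / (1 + X ω * η)) η₀ := by
        apply ContinuousAt.div
        · exact (continuous_const.mul continuous_id).continuousAt
        · exact (continuous_const.add (continuous_const.mul continuous_id)).continuousAt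
        · exact (hden hη₀.1 ω).ne'
      exact hc1.continuousWithinAt
  have hφcont : ContinuousOn φ (Set.Icc 0 (1 / σ2)) := by
    apply ContinuousOn.add
    · exact ((continuous_id.mul continuous_const).add
        ((continuous_const.mul continuous_id).mul continuous_const)).continuousOn
    · exact continuousOn_const.mul hTcont
  have hφ0 : φ 0 = 0 := by
    simp only [hφdef, hTdef]
    simp
  have hφtop : 1 ≤ φ (1 / σ2) := by
    have h1 : (1 / σ2) * σ2 = 1 := by field_simp
    have h2 : 0 ≤ α * T (1 / σ2) := mul_nonneg hα (hTnonneg h0σ)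
    have h3 : 0 ≤ α * (1 / σ2) * (c - I) := by positivity
    simp only [hφdef]; nlinarith
  obtain ⟨η, hηmem, hηeq⟩ := intermediate_value_Icc h0σ hφcont
    (Set.mem_Icc.2 ⟨by rw [hφ0]; norm_num, hφtop⟩ : (1:ℝ) ∈ Set.Icc (φ 0) (φ (1 / σ2)))
  have hηpos : 0 < η := by
    rcases eq_or_lt_of_le hηmem.1 with h | h
    · exfalso; rw [← h] at hηeq; rw [hφ0] at hηeq; norm_num at hηeq
    · exact h
  have hDpos : ∀ {a : ℝ}, 0 ≤ a → 0 < σ2 + α * (c - I) + α * J a := fun {a} ha => by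
    have := mul_nonneg hα (hJnonneg ha)
    have := mul_nonneg hα hcI
    linarith
  have hfix : (σ2 + α * c - α * ∫ ω, (X ω) ^ 2 * η / (1 + X ω * η) ∂μ)⁻¹ = η := by
    rw [hmain hηpos.le]
    have hη1 : η * (σ2 + α * (c - I) + α * J η) = 1 := by rw [← hφD hηpos.le]; exact hηeq
    exact inv_eq_of_mul_eq_one_left hη1
  refine ⟨η, ⟨⟨hηpos, hηmem.2⟩, hfix⟩, ?_⟩
  rintro η' ⟨⟨hη'pos, hη'le⟩, hη'fix⟩
  rw [hmain hη'pos.le] at hη'fix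
  have hφη' : φ η' = 1 := by
    have h1 : η' * (σ2 + α * (c - I) + α * J η') = 1 := by
      set d := σ2 + α * (c - I) + α * J η' with hd
      rw [← hη'fix]
      exact inv_mul_cancel₀ (ne_of_gt (hDpos hη'pos.le))
    rw [hφD hη'pos.le]; exact h1
  rcases lt_trichotomy η' η with h | h | h
  · exfalso
    have := hφmono hη'pos.le h
    rw [hφη', hηeq] at this; exact lt_irrefl _ this
  · exact h
  · exfalso
    have := hφmono hηpos.le h
    rw [hφη', hηeq] at this; exact lt_irrefl _ this
end

section
/- Monotone deterministic-equivalent comparison: with η₁* the fixed point of η = (σ² + αc + α·E[X/(1+Xη)])⁻¹ for bounded nonnegative random variable X, constant c ≥ 0, the resulting SINR β·η₁* is strictly decreasing in α (for fixed σ², c, X with P(X>0)>0). -/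
open MeasureTheory

theorem sinr_perfect_mmse_strict_anti_in_load
    {Ω : Type*} [MeasurableSpace Ω] (μ : Measure Ω) [IsProbabilityMeasure μ]
    (X : Ω → ℝ) (hXmeas : Measurable X) (hXnonneg : ∀ ω, 0 ≤ X ω)
    (Mb : ℝ) (hXbdd : ∀ ω, X ω ≤ Mb)
    (hXpos : 0 < μ {ω | 0 < X ω})
    (σ2 c β : ℝ) (hσ : 0 < σ2) (hc : 0 ≤ c) (hβ : 0 < β)
    (η : ℝ → ℝ)
    (hη : ∀ α : ℝ, 0 ≤ α →
      η α ∈ Set.Ioc 0 (1 / σ2) ∧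
      η α = (σ2 + α * c + α * ∫ ω, X ω / (1 + X ω * η α) ∂μ)⁻¹) :
    ∀ a b : ℝ, 0 ≤ a → a < b → β * η b < β * η a := by
  have hden : ∀ (t : ℝ), 0 ≤ t → ∀ ω, (0:ℝ) < 1 + X ω * t := by
    intro t ht ω
    nlinarith [hXnonneg ω, mul_nonneg (hXnonneg ω) ht]
  have hint : ∀ t : ℝ, 0 ≤ t → Integrable (fun ω => X ω / (1 + X ω * t)) μ := by
    intro t ht
    have hm : Measurable fun ω => X ω / (1 + X ω * t) :=
      hXmeas.div (measurable_const.add (hXmeas.mul_const t))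
    refine (integrable_const Mb).mono' hm.aestronglyMeasurable ?_
    filter_upwards with ω
    have h1 := hden t ht ω
    rw [Real.norm_eq_abs, abs_of_nonneg (div_nonneg (hXnonneg ω) h1.le)]
    calc X ω / (1 + X ω * t) ≤ X ω := by
          apply div_le_self (hXnonneg ω)
          nlinarith [mul_nonneg (hXnonneg ω) ht]
      _ ≤ Mb := hXbdd ω
  have hIpos : ∀ t : ℝ, 0 ≤ t → 0 < ∫ ω, X ω / (1 + X ω * t) ∂μ := by
    intro t ht
    rw [integral_pos_iff_support_of_nonneg
      (fun ω => div_nonneg (hXnonneg ω) (hden t ht ω).le) (hint t ht)]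
    refine lt_of_lt_of_le hXpos (measure_mono ?_)
    intro ω hω
    simp only [Function.mem_support]
    exact ne_of_gt (div_pos hω (hden t ht ω))
  intro a b ha hab
  have hb : 0 ≤ b := ha.trans hab.le
  obtain ⟨⟨hu0, hu1⟩, hueq⟩ := hη a ha
  obtain ⟨⟨hv0, hv1⟩, hveq⟩ := hη b hb
  set u := η a with hudef
  set v := η b with hvdef
  set Iu := ∫ ω, X ω / (1 + X ω * u) ∂μ with hIudef
  set Iv := ∫ ω, X ω / (1 + X ω * v) ∂μ with hIvdef
  have hIupos : 0 < Iu := hIpos u hu0.le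
  have hIvpos : 0 < Iv := hIpos v hv0.le
  have hEu : u⁻¹ = σ2 + a * c + a * Iu := by rw [hueq, inv_inv]
  have hEv : v⁻¹ = σ2 + b * c + b * Iv := by rw [hveq, inv_inv]
  by_contra hcon
  push_neg at hcon
  have huv : u ≤ v := le_of_mul_le_mul_left hcon hβ
  -- pointwise and integral comparison
  have hdiff : Iu - Iv ≤ (v - u) / v * Iu := by
    rw [hIudef, hIvdef, ← integral_sub (hint u hu0.le) (hint v hv0.le),
      ← integral_const_mul]
    refine integral_mono ((hint u hu0.le).sub (hint v hv0.le))
      ((hint u hu0.le).const_mul _) ?_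
    intro ω
    have h1 := hden u hu0.le ω
    have h2 := hden v hv0.le ω
    have hx := hXnonneg ω
    simp only [Pi.sub_apply]
    rw [div_sub_div _ _ h1.ne' h2.ne', div_mul_div_comm,
      div_le_div_iff₀ (by positivity) (by positivity)]
    nlinarith [mul_nonneg (mul_nonneg hx hx) (sub_nonneg.2 huv),
      mul_nonneg (mul_nonneg (mul_nonneg hx hx) (sub_nonneg.2 huv)) (mul_nonneg hx hv0.le),
      mul_nonneg hx hu0.le, mul_nonneg hx hv0.le]
  have heq : (v - u) / (u * v) = (a - b) * c + (a * Iu - b * Iv) := by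
    rw [← inv_sub_inv hu0.ne' hv0.ne', hEu, hEv]; ring
  have hA : a * Iu - b * Iv ≤ (v - u) / v * (a * Iu) + (a - b) * Iv := by
    have h := mul_le_mul_of_nonneg_left hdiff ha
    have hbv : a * Iv ≤ b * Iv := mul_le_mul_of_nonneg_right hab.le hIvpos.le
    nlinarith
  have haIu : a * Iu ≤ u⁻¹ - σ2 := by
    have : 0 ≤ a * c := mul_nonneg ha hc
    linarith [hEu]
  have hfac : 0 ≤ (v - u) / v := div_nonneg (sub_nonneg.2 huv) hv0.le
  have hB : (v - u) / v * (a * Iu) ≤ (v - u) / v * u⁻¹ := by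
    have := mul_le_mul_of_nonneg_left haIu hfac
    nlinarith [mul_nonneg hfac hσ.le]
  have hBeq : (v - u) / v * u⁻¹ = (v - u) / (u * v) := by
    rw [inv_eq_one_div, div_mul_div_comm, mul_one, mul_comm v u]
  have hC : (a - b) * c + (a - b) * Iv < 0 := by
    have h1 : (a - b) * c ≤ 0 := mul_nonpos_of_nonpos_of_nonneg (by linarith) hc
    have h2 : (a - b) * Iv < 0 := mul_neg_of_neg_of_pos (by linarith) hIvpos
    linarith
  linarith [heq, hA, hB, hBeq, hC]
end
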